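/- Let (X, d) be a metric space with its Borel σ-algebra, let t₁, …, tₛ ∈ X be distinct points, let a₁, …, aₛ be real numbers, let μ⁰ := Σ_{l=1}^{s} a_l·δ_{t_l}, and let r > 0 be such that the closed balls B̄(t_l, r) are pairwise disjoint. Let ε₂ > 0 with ε₂·r² ≤ 1, fix j ∈ {1, …, s}, and let η : X → ℝ be a bounded Borel function such that: |1 − η(x)| ≤ ε₂·d(x, t_j)² for all x ∈ B̄(t_j, r); |η(x)| ≤ ε₂·d(x, t_l)² for every l ≠ j and all x ∈ B̄(t_l, r); and |η(x)| ≤ 1 − ε₂·r² for all x in F_r := X \ ⋃_l B̄(t_l, r). Then for every finite signed Borel measure μ on X: |μ(B̄(t_j, r)) − a_j| ≤ |∫ η dμ − ∫ η dμ⁰| + ε₂·Σ_{l=1}^{s} ∫_{B̄(t_l,r)} d(x, t_l)² d|μ|(x) + (1 − ε₂·r²)·|μ|(F_r). -/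

import Mathlib

open MeasureTheory Metric

/-- Integral of a real function against a finite signed measure, via the
Jordan decomposition: `∫ f dμ = ∫ f dμ⁺ - ∫ f dμ⁻`. -/
noncomputable def signedIntegral {X : Type*} [MeasurableSpace X]
    (μ : SignedMeasure X) (f : X → ℝ) : ℝ :=
  (∫ x, f x ∂μ.toJordanDecomposition.posPart) -
    ∫ x, f x ∂μ.toJordanDecomposition.negPart

section helpers

variable {X : Type*} [MeasurableSpace X]

lemma my_integrable {ν : Measure X} [IsFiniteMeasure ν] {f : X → ℝ}
    (hf : Measurable f) {M : ℝ} (hM : ∀ x, |f x| ≤ M) : Integrable f ν :=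
  ⟨hf.aestronglyMeasurable, HasFiniteIntegral.of_bounded (C := M)
    (Filter.Eventually.of_forall fun x => by simpa [Real.norm_eq_abs] using hM x)⟩

lemma my_finite_sum {ι : Type*} (sf : Finset ι) (m : ι → Measure X)
    [∀ i, IsFiniteMeasure (m i)] : IsFiniteMeasure (∑ i ∈ sf, m i) := by
  constructor
  rw [Measure.finset_sum_apply]
  exact ENNReal.sum_lt_top.2 fun i _ => measure_lt_top _ _

lemma my_sum_toSignedMeasure {ι : Type*} (sf : Finset ι) (m : ι → Measure X)
    [∀ i, IsFiniteMeasure (m i)] :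
    (∑ i ∈ sf, m i).toSignedMeasure = ∑ i ∈ sf, (m i).toSignedMeasure := by
  induction sf using Finset.cons_induction with
  | empty => simp
  | cons i sf hi ih =>
      haveI := my_finite_sum sf m
      simp only [Finset.sum_cons, Measure.toSignedMeasure_add, ih]

lemma signedIntegral_eq_of_decomp (ν : SignedMeasure X)
    (P N : Measure X) [IsFiniteMeasure P] [IsFiniteMeasure N]
    (h : ν = P.toSignedMeasure - N.toSignedMeasure) {f : X → ℝ}
    (hf : Measurable f) {M : ℝ} (hM : ∀ x, |f x| ≤ M) :
    signedIntegral ν f = (∫ x, f x ∂P) - ∫ x, f x ∂N := by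
  have h2 := ν.toSignedMeasure_toJordanDecomposition
  rw [JordanDecomposition.toSignedMeasure] at h2
  have key : ν.toJordanDecomposition.posPart + N = P + ν.toJordanDecomposition.negPart := by
    rw [← Measure.toSignedMeasure_eq_toSignedMeasure_iff, Measure.toSignedMeasure_add,
      Measure.toSignedMeasure_add]
    have : ν.toJordanDecomposition.posPart.toSignedMeasure -
        ν.toJordanDecomposition.negPart.toSignedMeasure
        = P.toSignedMeasure - N.toSignedMeasure := by rw [h2, h]
    rw [sub_eq_sub_iff_add_eq_add] at this
    exact this
  have hintP : Integrable f P := my_integrable hf hM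
  have hintN : Integrable f N := my_integrable hf hM
  have hintp : Integrable f ν.toJordanDecomposition.posPart := my_integrable hf hM
  have hintn : Integrable f ν.toJordanDecomposition.negPart := my_integrable hf hM
  have hint : (∫ x, f x ∂ν.toJordanDecomposition.posPart) + ∫ x, f x ∂N
      = (∫ x, f x ∂P) + ∫ x, f x ∂ν.toJordanDecomposition.negPart := by
    rw [← integral_add_measure hintp hintN, ← integral_add_measure hintP hintn, key]
  rw [signedIntegral]
  linarith

lemma abs_signedIntegral_le (ν : SignedMeasure X) {f : X → ℝ}
    (hf : Measurable f) {M : ℝ} (hM : ∀ x, |f x| ≤ M) :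
    |signedIntegral ν f| ≤ ∫ x, |f x| ∂ν.totalVariation := by
  have hintp : Integrable f ν.toJordanDecomposition.posPart := my_integrable hf hM
  have hintn : Integrable f ν.toJordanDecomposition.negPart := my_integrable hf hM
  have hτ : ν.totalVariation
      = ν.toJordanDecomposition.posPart + ν.toJordanDecomposition.negPart := rfl
  rw [signedIntegral, hτ, integral_add_measure hintp.abs hintn.abs]
  have h1 : |∫ x, f x ∂ν.toJordanDecomposition.posPart|
      ≤ ∫ x, |f x| ∂ν.toJordanDecomposition.posPart := by
    simpa [Real.norm_eq_abs] using
      norm_integral_le_integral_norm (μ := ν.toJordanDecomposition.posPart) f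
  have h2 : |∫ x, f x ∂ν.toJordanDecomposition.negPart|
      ≤ ∫ x, |f x| ∂ν.toJordanDecomposition.negPart := by
    simpa [Real.norm_eq_abs] using
      norm_integral_le_integral_norm (μ := ν.toJordanDecomposition.negPart) f
  calc |(∫ x, f x ∂ν.toJordanDecomposition.posPart) -
        ∫ x, f x ∂ν.toJordanDecomposition.negPart|
      ≤ |∫ x, f x ∂ν.toJordanDecomposition.posPart| +
        |∫ x, f x ∂ν.toJordanDecomposition.negPart| := abs_sub _ _
    _ ≤ _ := add_le_add h1 h2

end helpers

theorem stmt_4 {X : Type*} [MetricSpace X] [MeasurableSpace X] [BorelSpace X]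
    (s : ℕ) (t : Fin s → X) (ht : Function.Injective t) (a : Fin s → ℝ)
    (μ0 : SignedMeasure X)
    (hμ0 : μ0 = ∑ l, a l • (Measure.dirac (t l)).toSignedMeasure)
    (r : ℝ) (hr : 0 < r)
    (hdisj : Pairwise fun k l => Disjoint (closedBall (t k) r) (closedBall (t l) r))
    (ε₂ : ℝ) (hε₂ : 0 < ε₂) (hε₂r : ε₂ * r ^ 2 ≤ 1)
    (j : Fin s)
    (η : X → ℝ) (hηmeas : Measurable η) (hηbdd : ∃ M, ∀ x, |η x| ≤ M)
    (hj : ∀ x ∈ closedBall (t j) r, |1 - η x| ≤ ε₂ * dist x (t j) ^ 2)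
    (hl : ∀ l, l ≠ j → ∀ x ∈ closedBall (t l) r, |η x| ≤ ε₂ * dist x (t l) ^ 2)
    (hfar : ∀ x ∈ (⋃ l, closedBall (t l) r)ᶜ, |η x| ≤ 1 - ε₂ * r ^ 2)
    (μ : SignedMeasure X) :
    |μ (closedBall (t j) r) - a j| ≤
      |signedIntegral μ η - signedIntegral μ0 η|
      + ε₂ * ∑ l, ∫ x in closedBall (t l) r, dist x (t l) ^ 2 ∂μ.totalVariation
      + (1 - ε₂ * r ^ 2) * (μ.totalVariation ((⋃ l, closedBall (t l) r)ᶜ)).toReal := by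
  obtain ⟨M, hM⟩ := hηbdd
  set P := μ.toJordanDecomposition.posPart with hPdef
  set N := μ.toJordanDecomposition.negPart with hNdef
  set τ := μ.totalVariation with hτdef
  have hτPN : τ = P + N := rfl
  haveI : IsFiniteMeasure τ := by rw [hτPN]; infer_instance
  set B : Fin s → Set X := fun l => closedBall (t l) r with hBdef
  have hBmeas : ∀ l, MeasurableSet (B l) := fun l => measurableSet_closedBall
  set U : Set X := ⋃ l, B l with hUdef
  have hUmeas : MeasurableSet U := MeasurableSet.iUnion hBmeas
  have hmem : ∀ l, t l ∈ B l := fun l => mem_closedBall_self hr.le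
  -- values of η at the centers
  have hηj : η (t j) = 1 := by
    have h := hj (t j) (hmem j)
    rw [dist_self] at h
    norm_num at h
    linarith
  have hηl : ∀ l, l ≠ j → η (t l) = 0 := by
    intro l hlj
    have h := hl l hlj (t l) (hmem l)
    rw [dist_self] at h
    norm_num at h
    exact h
  -- value of signedIntegral μ0 η
  set P0 : Measure X := ∑ l, ((a l).toNNReal) • Measure.dirac (t l) with hP0def
  set N0 : Measure X := ∑ l, ((-(a l)).toNNReal) • Measure.dirac (t l) with hN0def
  haveI : IsFiniteMeasure P0 := my_finite_sum _ _
  haveI : IsFiniteMeasure N0 := my_finite_sum _ _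
  have hdecomp : μ0 = P0.toSignedMeasure - N0.toSignedMeasure := by
    rw [hμ0]
    simp only [hP0def, hN0def, my_sum_toSignedMeasure]
    simp only [Measure.toSignedMeasure_smul]
    rw [← Finset.sum_sub_distrib]
    refine Finset.sum_congr rfl fun l _ => ?_
    rw [NNReal.smul_def, NNReal.smul_def]
    refine (congrArg (fun c : ℝ => c • (Measure.dirac (t l)).toSignedMeasure)
      (?_ : a l = ((a l).toNNReal : ℝ) - ((-a l).toNNReal : ℝ))).trans
      (by ext i hi; simp only [VectorMeasure.coe_sub, VectorMeasure.coe_smul, Pi.sub_apply,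
        Pi.smul_apply, smul_eq_mul]; ring)
    rw [Real.coe_toNNReal', Real.coe_toNNReal']
    rcases le_total 0 (a l) with h | h
    · rw [max_eq_left h, max_eq_right (neg_nonpos.2 h), sub_zero]
    · rw [max_eq_right h, max_eq_left (neg_nonneg.2 h), zero_sub, neg_neg]
  have hsI0 : signedIntegral μ0 η = a j := by
    rw [signedIntegral_eq_of_decomp μ0 P0 N0 hdecomp hηmeas hM]
    simp only [hP0def, hN0def]
    rw [integral_finset_sum_measure (fun l _ => my_integrable hηmeas hM),
      integral_finset_sum_measure (fun l _ => my_integrable hηmeas hM)]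
    simp only [integral_smul_nnreal_measure, integral_dirac]
    rw [Finset.sum_eq_single j (fun l _ hlj => by rw [hηl l hlj]; exact smul_zero _) (by simp),
      Finset.sum_eq_single j (fun l _ hlj => by rw [hηl l hlj]; exact smul_zero _) (by simp)]
    rw [hηj, NNReal.smul_def, NNReal.smul_def, smul_eq_mul, smul_eq_mul, mul_one, mul_one,
      Real.coe_toNNReal', Real.coe_toNNReal']
    rcases le_total 0 (a j) with h | h
    · rw [max_eq_left h, max_eq_right (neg_nonpos.2 h), sub_zero]
    · rw [max_eq_right h, max_eq_left (neg_nonneg.2 h), zero_sub, neg_neg]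
  -- the indicator function and g
  set ind : X → ℝ := Set.indicator (B j) (fun _ => (1:ℝ)) with hinddef
  have hindmeas : Measurable ind := measurable_const.indicator (hBmeas j)
  have hindbd : ∀ x, |ind x| ≤ 1 := by
    intro x
    by_cases hx : x ∈ B j <;>
      simp [hinddef, Set.indicator_of_mem, Set.indicator_of_notMem, hx]
  set g : X → ℝ := fun x => ind x - η x with hgdef
  have hgmeas : Measurable g := hindmeas.sub hηmeas
  have hgbd : ∀ x, |g x| ≤ 1 + M := fun x =>
    (abs_sub _ _).trans (add_le_add (hindbd x) (hM x))
  -- μ (B j) = ∫ ind dP - ∫ ind dN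
  have hμBj : μ (B j) = (P (B j)).toReal - (N (B j)).toReal := by
    conv_lhs => rw [← μ.toSignedMeasure_toJordanDecomposition]
    rw [JordanDecomposition.toSignedMeasure, Measure.toSignedMeasure_sub_apply (hBmeas j)]
    rfl
  have hindP : ∫ x, ind x ∂P = (P (B j)).toReal := by
    rw [hinddef]
    exact integral_indicator_one (hBmeas j)
  have hindN : ∫ x, ind x ∂N = (N (B j)).toReal := by
    rw [hinddef]
    exact integral_indicator_one (hBmeas j)
  have key1 : μ (B j) - signedIntegral μ η = signedIntegral μ g := by
    rw [hμBj, signedIntegral, signedIntegral, ← hPdef, ← hNdef,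
      integral_sub (my_integrable hindmeas hindbd) (my_integrable hηmeas hM),
      integral_sub (my_integrable hindmeas hindbd) (my_integrable hηmeas hM),
      hindP, hindN]
    ring
  -- bound |signedIntegral μ g| by total variation integral
  have habs : |signedIntegral μ g| ≤ ∫ x, |g x| ∂τ := abs_signedIntegral_le μ hgmeas hgbd
  -- split into near and far regions
  have hgint : Integrable (fun x => |g x|) τ := (my_integrable hgmeas hgbd).abs
  have hsplit : ∫ x, |g x| ∂τ = (∫ x in U, |g x| ∂τ) + ∫ x in Uᶜ, |g x| ∂τ :=
    (integral_add_compl hUmeas hgint).symm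
  have hUsum : ∫ x in U, |g x| ∂τ = ∑ l, ∫ x in B l, |g x| ∂τ := by
    have hUeq : U = ⋃ l ∈ Finset.univ, B l := by simp [hUdef]
    rw [hUeq, integral_biUnion_finset Finset.univ (fun l _ => hBmeas l)
      (fun k _ l _ hkl => hdisj hkl) (fun l _ => hgint.integrableOn)]
  have hterm : ∀ l, (∫ x in B l, |g x| ∂τ) ≤ ε₂ * ∫ x in B l, dist x (t l) ^ 2 ∂τ := by
    intro l
    have hint2 : IntegrableOn (fun x => ε₂ * dist x (t l) ^ 2) (B l) τ := by
      refine Measure.integrableOn_of_bounded (M := ε₂ * r ^ 2) (measure_ne_top τ _)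
        ((measurable_const.mul
          (((continuous_id.dist continuous_const).measurable).pow_const 2)).aestronglyMeasurable) ?_
      · refine (ae_restrict_iff' (hBmeas l)).2 (Filter.Eventually.of_forall fun x hx => ?_)
        have hd : dist x (t l) ≤ r := mem_closedBall.1 hx
        have hd0 : (0:ℝ) ≤ dist x (t l) := dist_nonneg
        rw [Real.norm_eq_abs, abs_of_nonneg (by positivity)]
        exact mul_le_mul_of_nonneg_left (by nlinarith) hε₂.le
    have hmono : (∫ x in B l, |g x| ∂τ) ≤ ∫ x in B l, ε₂ * dist x (t l) ^ 2 ∂τ := by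
      refine setIntegral_mono_on hgint.integrableOn hint2 (hBmeas l) fun x hx => ?_
      by_cases hlj : l = j
      · subst hlj
        have : ind x = 1 := Set.indicator_of_mem hx _
        rw [hgdef]
        simpa [this] using hj x hx
      · have hxnotj : x ∉ B j := fun hxj =>
          Set.disjoint_left.1 (hdisj hlj) hx hxj
        have : ind x = 0 := Set.indicator_of_notMem hxnotj _
        rw [hgdef]
        simp only [this, zero_sub, abs_neg]
        exact hl l hlj x hx
    rwa [integral_const_mul] at hmono
  have hfarbound : (∫ x in Uᶜ, |g x| ∂τ) ≤ (1 - ε₂ * r ^ 2) * (τ Uᶜ).toReal := by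
    have hle : (∫ x in Uᶜ, |g x| ∂τ) ≤ ∫ _x in Uᶜ, (1 - ε₂ * r ^ 2) ∂τ := by
      refine setIntegral_mono_on hgint.integrableOn
        (integrableOn_const (measure_ne_top τ _)) hUmeas.compl fun x hx => ?_
      have hxnotj : x ∉ B j := fun hxj => hx (Set.mem_iUnion.2 ⟨j, hxj⟩)
      have : ind x = 0 := Set.indicator_of_notMem hxnotj _
      rw [hgdef]
      simp only [this, zero_sub, abs_neg]
      exact hfar x hx
    rw [setIntegral_const, smul_eq_mul] at hle
    rw [measureReal_def] at hle
    linarith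
  -- assemble
  have hsum : (∑ l, ∫ x in B l, |g x| ∂τ) ≤ ε₂ * ∑ l, ∫ x in B l, dist x (t l) ^ 2 ∂τ := by
    rw [Finset.mul_sum]
    exact Finset.sum_le_sum fun l _ => hterm l
  have hdecompval : μ (B j) - a j = signedIntegral μ g +
      (signedIntegral μ η - signedIntegral μ0 η) := by
    rw [hsI0] at *
    linarith [key1]
  rw [hdecompval]
  calc |signedIntegral μ g + (signedIntegral μ η - signedIntegral μ0 η)|
      ≤ |signedIntegral μ g| + |signedIntegral μ η - signedIntegral μ0 η| := abs_add_le _ _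
    _ ≤ (∫ x, |g x| ∂τ) + |signedIntegral μ η - signedIntegral μ0 η| := by linarith
    _ ≤ _ := by
        rw [hsplit]
        have := hfarbound
        have := hsum
        rw [hUsum]
        linarith
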